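/- Suppose Ĵ^cl_K(X,μ_N) ≤ V̂_∞(X) + Kδ(N) for all K, where V̂_∞(X) is finite, V̂_∞ ≥ 0, and ℓ̂ = ℓ − c with c = ℓ(X^s,U^s). Then the MPC closed loop is approximately overtaking optimal: for every admissible control sequence U, liminf_{K→∞} ( Σ_{k=0}^{K−1} ( ℓ(X_U(k,X),U(k)) − ℓ(X_{μ_N}(k,X), μ_N(X_{μ_N}(k,X))) ) + Kδ(N) ) ≥ 0. -/

import Mathlib

open Filter Finset

/-- Trajectory of the deterministic controlled system `X(k+1) = F(X(k), U(k))`. -/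
def traj {S C : Type*} (F : S → C → S) (x : S) (U : ℕ → C) : ℕ → S
  | 0 => x
  | k + 1 => F (traj F x U k) (U k)

/-- Corollary 2: approximate overtaking optimality of the MPC closed loop. If
`Ĵ^cl_K(X, μ_N) ≤ V̂_∞(X) + K·δ(N)` for all `K`, with `V̂_∞(X)` finite and nonnegative and
`ℓ̂ = ℓ − c`, then for every admissible control `U`,
`liminf_{K→∞} ( Σ_{k<K} (ℓ(X_U(k),U(k)) − ℓ(X_{μ_N}(k),μ_N(X_{μ_N}(k)))) + Kδ(N) ) ≥ 0`. -/
theorem mpc_approximately_overtaking_optimal {S C : Type*}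
    (F : S → C → S)           -- system dynamics
    (ℓ : S → C → ℝ) (c : ℝ)   -- stage cost and stationary cost `c = ℓ(X^s, U^s)`
    (X : S) (μN : S → C)
    (Xcl : ℕ → S)             -- MPC closed-loop trajectory
    (hcl0 : Xcl 0 = X)
    (hcl : ∀ k, Xcl (k + 1) = F (Xcl k) (μN (Xcl k)))
    (VX δN : ℝ) (hVXnn : 0 ≤ VX)  -- `VX = V̂_∞(X)`, finite and nonnegative
    -- shifted closed-loop performance bound `Ĵ^cl_K(X,μ_N) ≤ V̂_∞(X) + Kδ(N)`
    (hperf : ∀ K : ℕ,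
      (∑ k ∈ Finset.range K, (ℓ (Xcl k) (μN (Xcl k)) - c)) ≤ VX + K * δN)
    -- `U*_∞` optimal for the shifted problem: `V̂_∞(X) = Σ_{k=0}^∞ ℓ̂(X_{U*_∞}(k), U*_∞(k))`
    (Ustar : ℕ → C)
    (hVX : Tendsto
      (fun K => ∑ k ∈ Finset.range K, (ℓ (traj F X Ustar k) (Ustar k) - c))
      atTop (nhds VX))
    -- optimal operation: every admissible `U` is overtaken by `U*_∞` for the shifted cost
    (hop : ∀ U : ℕ → C,
      0 ≤ Filter.liminf
        (fun K => ((∑ k ∈ Finset.range K,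
          ((ℓ (traj F X U k) (U k) - c) - (ℓ (traj F X Ustar k) (Ustar k) - c)) : ℝ) : EReal))
        atTop) :
    ∀ U : ℕ → C,
      0 ≤ Filter.liminf
        (fun K : ℕ => (((∑ k ∈ Finset.range K,
          (ℓ (traj F X U k) (U k) - ℓ (Xcl k) (μN (Xcl k)))) + K * δN : ℝ) : EReal))
        atTop := by
  intro U
  set f : ℕ → EReal := fun K : ℕ => (((∑ k ∈ Finset.range K,
      (ℓ (traj F X U k) (U k) - ℓ (Xcl k) (μN (Xcl k)))) + K * δN : ℝ) : EReal) with hfdef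
  have key : ∀ ε : ℝ, 0 < ε → ((-(2*ε) : ℝ) : EReal) ≤ Filter.liminf f atTop := by
    intro ε hε
    have hA := hop U
    have h1 : ∀ᶠ K : ℕ in atTop,
        ((-ε : ℝ) : EReal) < ((∑ k ∈ Finset.range K,
          ((ℓ (traj F X U k) (U k) - c) - (ℓ (traj F X Ustar k) (Ustar k) - c)) : ℝ) : EReal) := by
      refine Filter.eventually_lt_of_lt_liminf ?_ (by isBoundedDefault)
      refine lt_of_lt_of_le ?_ hA
      exact_mod_cast neg_lt_zero.mpr hε
    have h2 : ∀ᶠ K : ℕ in atTop,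
        |(∑ k ∈ Finset.range K, (ℓ (traj F X Ustar k) (Ustar k) - c)) - VX| < ε := by
      have := Metric.tendsto_atTop.mp hVX ε hε
      obtain ⟨N, hN⟩ := this
      refine Filter.eventually_atTop.mpr ⟨N, fun n hn => ?_⟩
      have := hN n hn
      rwa [Real.dist_eq] at this
    have h3 : ∀ᶠ K : ℕ in atTop, ((-(2*ε) : ℝ) : EReal) ≤ f K := by
      filter_upwards [h1, h2] with K hK1 hK2
      have hK1' : (-ε : ℝ) < ∑ k ∈ Finset.range K,
          ((ℓ (traj F X U k) (U k) - c) - (ℓ (traj F X Ustar k) (Ustar k) - c)) := by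
        exact_mod_cast hK1
      have hperfK := hperf K
      have habs : (∑ k ∈ Finset.range K, (ℓ (traj F X Ustar k) (Ustar k) - c)) - VX > -ε :=
        neg_lt_of_abs_lt hK2
      have hsplit1 : ∑ k ∈ Finset.range K,
          ((ℓ (traj F X U k) (U k) - c) - (ℓ (traj F X Ustar k) (Ustar k) - c))
          = (∑ k ∈ Finset.range K, (ℓ (traj F X U k) (U k) - c))
            - ∑ k ∈ Finset.range K, (ℓ (traj F X Ustar k) (Ustar k) - c) :=
        Finset.sum_sub_distrib _ _
      have hsplit2 : ∑ k ∈ Finset.range K,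
          (ℓ (traj F X U k) (U k) - ℓ (Xcl k) (μN (Xcl k)))
          = (∑ k ∈ Finset.range K, (ℓ (traj F X U k) (U k) - c))
            - ∑ k ∈ Finset.range K, (ℓ (Xcl k) (μN (Xcl k)) - c) := by
        rw [← Finset.sum_sub_distrib]; apply Finset.sum_congr rfl; intro k _; ring
      have hreal : (-(2*ε) : ℝ) ≤ (∑ k ∈ Finset.range K,
          (ℓ (traj F X U k) (U k) - ℓ (Xcl k) (μN (Xcl k)))) + K * δN := by
        rw [hsplit2]
        rw [hsplit1] at hK1'
        linarith
      simp only [hfdef]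
      exact_mod_cast hreal
    exact Filter.le_liminf_of_le (by isBoundedDefault) h3
  refine le_of_forall_lt fun b hb => ?_
  rcases eq_or_ne b ⊥ with rfl | hbot
  · exact lt_of_lt_of_le (EReal.bot_lt_coe _) (key 1 one_pos)
  · have hbtop : b ≠ ⊤ := ne_top_of_lt hb
    lift b to ℝ using ⟨hbtop, hbot⟩
    have hbneg : b < 0 := by exact_mod_cast hb
    have hε : 0 < -b/4 := by linarith
    refine lt_of_lt_of_le ?_ (key (-b/4) hε)
    have : b < -(2*(-b/4)) := by linarith
    exact_mod_cast this
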